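/- arXiv:1905.06138 — 2 statements merged into one kernel-verified Lean document; each statement's English description precedes it below -/
import Mathlib

section
/- Let α be an irrational real number with 0 < α < 1/2. For every k ≥ 0 there exists a nonempty factor of slope α whose minimum abelian period equals q_k. -/
open scoped Classical

noncomputable section

namespace SturmianAbelian

/-- Complete quotients: `cq α t = α_t` for `t ≥ 1`; `cq α 0 = α` is a dummy value chosen so that
`cq α 1 = 1/(α - ⌊α⌋) = 1/α` when `0 < α < 1`. -/
noncomputable def cq (α : ℝ) : ℕ → ℝ
  | 0 => α
  | t + 1 => (cq α t - ⌊cq α t⌋)⁻¹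

/-- Partial quotients: `pq α t = a_t = ⌊α_t⌋` for `t ≥ 1`. -/
noncomputable def pq (α : ℝ) (t : ℕ) : ℕ := (⌊cq α t⌋).toNat

/-- Denominators of the convergents of `α`: `qd α k = q_k`, with
`q_0 = 1`, `q_1 = a_1`, `q_k = a_k q_{k-1} + q_{k-2}`. -/
noncomputable def qd (α : ℝ) : ℕ → ℕ
  | 0 => 1
  | 1 => pq α 1
  | (k + 2) => pq α (k + 2) * qd α (k + 1) + qd α k

/-- Distance from `x` to the nearest integer, `‖x‖`. -/
noncomputable def nint (x : ℝ) : ℝ := min (Int.fract x) (1 - Int.fract x)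

/-- The representative of `x` modulo 1 lying in `(0, 1]`. -/
noncomputable def fract' (x : ℝ) : ℝ := 1 - Int.fract (-x)

/-- The Sturmian word of slope `α` and intercept `ρ` in the lower convention:
`s n = 1` iff the fractional part of `ρ + nα` lies in `[1 - α, 1)`. -/
noncomputable def lowerWord (α ρ : ℝ) (n : ℕ) : Bool :=
  if 1 - α ≤ Int.fract (ρ + (n : ℝ) * α) then true else false

/-- The Sturmian word of slope `α` and intercept `ρ` in the upper convention:
`s n = 1` iff the representative of `ρ + nα` modulo 1 in `(0,1]` lies in `(1 - α, 1]`. -/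
noncomputable def upperWord (α ρ : ℝ) (n : ℕ) : Bool :=
  if 1 - α < fract' (ρ + (n : ℝ) * α) then true else false

/-- `s` is a Sturmian word of slope `α` (either convention, some intercept `ρ ∈ [0,1)`). -/
def IsSturmian (α : ℝ) (s : ℕ → Bool) : Prop :=
  ∃ ρ : ℝ, 0 ≤ ρ ∧ ρ < 1 ∧ (s = lowerWord α ρ ∨ s = upperWord α ρ)

/-- `w` is a (finite, contiguous) factor of the infinite word `s`. -/
def FactorOf (s : ℕ → Bool) (w : List Bool) : Prop :=
  ∃ i : ℕ, w = (List.range w.length).map fun j => s (i + j)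

/-- `w` is a factor of slope `α`. -/
def IsFactor (α : ℝ) (w : List Bool) : Prop :=
  ∃ s : ℕ → Bool, IsSturmian α s ∧ FactorOf s w

/-- Abelian equivalence: same length and the same number of occurrences of the letter 1. -/
def AbEq (u v : List Bool) : Prop :=
  u.length = v.length ∧ u.count true = v.count true

/-- `u` is an abelian power of period `m` and exponent `e`: a concatenation of `e ≥ 2` pairwise
abelian equivalent blocks, each of length `m ≥ 1`. -/
def IsAbelianPower (m e : ℕ) (u : List Bool) : Prop :=
  1 ≤ m ∧ 2 ≤ e ∧ u.length = e * m ∧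
  ∀ i < e, ∀ j < e, AbEq ((u.drop (i * m)).take m) ((u.drop (j * m)).take m)

/-- `w` has abelian period `m`: `w` is a contiguous factor of some abelian power of period `m`. -/
def HasAbPeriod (w : List Bool) (m : ℕ) : Prop :=
  ∃ e u, IsAbelianPower m e u ∧ w <:+: u

/-- `m` is the minimum abelian period of `w`. -/
def MinAbPeriod (w : List Bool) (m : ℕ) : Prop :=
  IsLeast {p : ℕ | HasAbPeriod w p} m

/-- `M(α) = {t·q_k : k ≥ 0, 1 ≤ t ≤ a_{k+1}}`. -/
def Mset (α : ℝ) : Set ℕ :=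
  {m | ∃ k t : ℕ, 1 ≤ t ∧ t ≤ pq α (k + 1) ∧ m = t * qd α k}

/-- The set of denominators of convergents and semiconvergents of `α`. -/
def Qsc (α : ℝ) : Set ℕ :=
  {m | (∃ k : ℕ, m = qd α k) ∨
    ∃ k l : ℕ, 1 ≤ k ∧ 1 ≤ l ∧ l < pq α (k + 1) ∧ m = l * qd α k + qd α (k - 1)}

/-- The singular factor of length `q_k`: the unique factor of slope `α` of length `q_k` that is not
abelian equivalent to any other factor of slope `α` of the same length. -/
def IsSingular (α : ℝ) (k : ℕ) (s : List Bool) : Prop :=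
  IsFactor α s ∧ s.length = qd α k ∧
  ∀ u : List Bool, IsFactor α u → u.length = qd α k → u ≠ s → ¬ AbEq u s

/-- `v` occurs in `u` at position `i`. -/
def OccursAt (v u : List Bool) (i : ℕ) : Prop :=
  i + v.length ≤ u.length ∧ (u.drop i).take v.length = v

/-- `u` is a complete first return to `v`: `v` is a prefix and a suffix of `u` and `v` has exactly
two occurrences in `u`. -/
def CompleteFirstReturn (v u : List Bool) : Prop :=
  v <+: u ∧ v <:+ u ∧ {i | OccursAt v u i}.ncard = 2

/-- `u` is a complete first return to `v` in the same phase. -/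
def CFRSamePhase (v u : List Bool) : Prop :=
  v <+: u ∧ v <:+ u ∧ u.length % v.length = 0 ∧
  2 ≤ {i | OccursAt v u i}.ncard ∧
  ∀ i : ℕ, OccursAt v u i → i % v.length = 0 → i = 0 ∨ i = u.length - v.length

/-! ### Auxiliary development for the main theorem -/

section Aux

variable {α : ℝ}

/-- Numerators of the convergents. -/
noncomputable def pn (α : ℝ) : ℕ → ℤ
  | 0 => 0
  | 1 => 1
  | (k + 2) => (pq α (k + 2) : ℤ) * pn α (k + 1) + pn α k

/-- `rr α j = q_j α - p_j`. -/
noncomputable def rr (α : ℝ) (j : ℕ) : ℝ := (qd α j : ℝ) * α - (pn α j : ℝ)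

/-- `bb α j = |q_j α - p_j| = (-1)^j (q_j α - p_j)`. -/
noncomputable def bb (α : ℝ) (j : ℕ) : ℝ := (-1 : ℝ) ^ j * rr α j

lemma floor_alpha (h0 : 0 < α) (h2 : α < 1 / 2) : ⌊α⌋ = 0 :=
  Int.floor_eq_zero_iff.mpr ⟨h0.le, by linarith⟩

lemma cq_one (h0 : 0 < α) (h2 : α < 1 / 2) : cq α 1 = α⁻¹ := by
  show (cq α 0 - (⌊cq α 0⌋ : ℝ))⁻¹ = α⁻¹
  show (α - (⌊α⌋ : ℝ))⁻¹ = α⁻¹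
  rw [floor_alpha h0 h2]
  norm_num

lemma cq_succ_eq (t : ℕ) : cq α (t + 1) = (Int.fract (cq α t))⁻¹ := by
  show (cq α t - (⌊cq α t⌋ : ℝ))⁻¹ = _
  rw [Int.fract]

lemma cq_prop (hirr : Irrational α) (h0 : 0 < α) (h2 : α < 1 / 2) :
    ∀ t, Irrational (cq α (t + 1)) ∧ 1 < cq α (t + 1) := by
  intro t
  induction t with
  | zero =>
      rw [cq_one h0 h2]
      refine ⟨hirr.inv, ?_⟩
      rw [lt_inv_comm₀ one_pos h0]
      linarith
  | succ n ih =>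
      obtain ⟨ih1, ih2⟩ := ih
      have hfr : Irrational (Int.fract (cq α (n + 1))) := by
        unfold Int.fract
        exact ih1.sub_intCast _
      have hfr0 : 0 < Int.fract (cq α (n + 1)) := by
        rcases (Int.fract_nonneg (cq α (n + 1))).lt_or_eq with h | h
        · exact h
        · exact absurd h.symm hfr.ne_zero
      have hfr1 : Int.fract (cq α (n + 1)) < 1 := Int.fract_lt_one _
      rw [cq_succ_eq (n + 1)]
      exact ⟨hfr.inv, (one_lt_inv₀ hfr0).mpr hfr1⟩

lemma cq_pos (hirr : Irrational α) (h0 : 0 < α) (h2 : α < 1 / 2) (t : ℕ) :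
    0 < cq α (t + 1) := lt_trans one_pos (cq_prop hirr h0 h2 t).2

lemma pq_cast (hirr : Irrational α) (h0 : 0 < α) (h2 : α < 1 / 2) (t : ℕ) :
    (pq α (t + 1) : ℤ) = ⌊cq α (t + 1)⌋ := by
  have h1 : (1 : ℤ) ≤ ⌊cq α (t + 1)⌋ := by
    rw [Int.le_floor]
    exact_mod_cast (cq_prop hirr h0 h2 t).2.le
  exact Int.toNat_of_nonneg (by omega)

lemma pq_pos (hirr : Irrational α) (h0 : 0 < α) (h2 : α < 1 / 2) (t : ℕ) :
    1 ≤ pq α (t + 1) := by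
  have h1 : (1 : ℤ) ≤ ⌊cq α (t + 1)⌋ := by
    rw [Int.le_floor]
    exact_mod_cast (cq_prop hirr h0 h2 t).2.le
  have := pq_cast hirr h0 h2 t
  omega

lemma pq_one_ge_two (hirr : Irrational α) (h0 : 0 < α) (h2 : α < 1 / 2) :
    2 ≤ pq α 1 := by
  have hinv : (2 : ℝ) < α⁻¹ := by
    rw [lt_inv_comm₀ (by norm_num) h0]
    linarith
  have h1 : (2 : ℤ) ≤ ⌊cq α 1⌋ := by
    rw [Int.le_floor, cq_one h0 h2]
    exact_mod_cast hinv.le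
  have h3 := pq_cast hirr h0 h2 0
  norm_num at h3
  omega

lemma cq_eq (hirr : Irrational α) (h0 : 0 < α) (h2 : α < 1 / 2) (t : ℕ) :
    cq α (t + 1) = (pq α (t + 1) : ℝ) + (cq α (t + 2))⁻¹ := by
  have h1 : cq α (t + 2) = (Int.fract (cq α (t + 1)))⁻¹ := cq_succ_eq (t + 1)
  rw [h1, inv_inv]
  have h2' : ((pq α (t + 1) : ℕ) : ℝ) = ((⌊cq α (t + 1)⌋ : ℤ) : ℝ) := by
    exact_mod_cast pq_cast hirr h0 h2 t
  rw [h2']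
  have := Int.floor_add_fract (cq α (t + 1))
  linarith

lemma qd_zero : qd α 0 = 1 := rfl
lemma qd_one : qd α 1 = pq α 1 := rfl
lemma qd_two_step (j : ℕ) : qd α (j + 2) = pq α (j + 2) * qd α (j + 1) + qd α j := rfl

lemma qd_pos (hirr : Irrational α) (h0 : 0 < α) (h2 : α < 1 / 2) :
    ∀ j, 0 < qd α j := by
  have key : ∀ j, 0 < qd α j ∧ 0 < qd α (j + 1) := by
    intro j
    induction j with
    | zero =>
        refine ⟨by norm_num [qd_zero], ?_⟩
        rw [qd_one]
        exact lt_of_lt_of_le one_pos (pq_pos hirr h0 h2 0)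
    | succ n ih =>
        refine ⟨ih.2, ?_⟩
        rw [qd_two_step]
        have := pq_pos hirr h0 h2 (n + 1)
        nlinarith [ih.1, ih.2]
  exact fun j => (key j).1

lemma qd_lt (hirr : Irrational α) (h0 : 0 < α) (h2 : α < 1 / 2) (j : ℕ) :
    qd α j < qd α (j + 1) := by
  cases j with
  | zero =>
      rw [qd_zero, qd_one]
      exact lt_of_lt_of_le one_lt_two (pq_one_ge_two hirr h0 h2)
  | succ n =>
      rw [qd_two_step]
      have h1 := pq_pos hirr h0 h2 (n + 1)
      have h2' := qd_pos hirr h0 h2 n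
      have h3 := qd_pos hirr h0 h2 (n + 1)
      nlinarith

lemma qd_ge_two (hirr : Irrational α) (h0 : 0 < α) (h2 : α < 1 / 2) (j : ℕ) :
    2 ≤ qd α (j + 1) := by
  induction j with
  | zero => rw [qd_one]; exact pq_one_ge_two hirr h0 h2
  | succ n ih => have := qd_lt hirr h0 h2 (n + 1); omega

end Aux
section Aux2

variable {α : ℝ}

lemma rr_zero : rr α 0 = α := by simp [rr, qd_zero, pn]

lemma rr_ne (hirr : Irrational α) (h0 : 0 < α) (h2 : α < 1 / 2) (j : ℕ) :
    rr α j ≠ 0 := by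
  intro h
  have hq : (qd α j : ℝ) ≠ 0 := Nat.cast_ne_zero.mpr (qd_pos hirr h0 h2 j).ne'
  have hα : α = (pn α j : ℝ) / (qd α j : ℝ) := by
    rw [eq_div_iff hq]
    unfold rr at h
    linarith
  exact hirr ⟨(pn α j : ℚ) / (qd α j : ℚ), by push_cast; exact hα.symm⟩

lemma rr_rec (hirr : Irrational α) (h0 : 0 < α) (h2 : α < 1 / 2) :
    ∀ j, rr α (j + 1) * cq α (j + 2) = - rr α j := by
  intro j
  induction j with
  | zero =>
      have hr0 : rr α 0 = α := rr_zero
      have hr1 : rr α 1 = (pq α 1 : ℝ) * α - 1 := by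
        simp [rr, qd_one, pn]
      have hc1 : cq α 1 = α⁻¹ := cq_one h0 h2
      have hc2 : cq α 2 = (Int.fract (cq α 1))⁻¹ := cq_succ_eq 1
      have hfr : Int.fract (cq α 1) = α⁻¹ - (pq α 1 : ℝ) := by
        unfold Int.fract
        rw [hc1]
        have : ((pq α 1 : ℕ) : ℝ) = ((⌊cq α 1⌋ : ℤ) : ℝ) := by
          exact_mod_cast pq_cast hirr h0 h2 0
        rw [this, hc1]
      have hfr_ne : Int.fract (cq α 1) ≠ 0 := by
        have h1 := cq_prop hirr h0 h2 0
        have : Irrational (Int.fract (cq α 1)) := by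
          unfold Int.fract
          exact h1.1.sub_intCast _
        exact this.ne_zero
      rw [hr0, hr1, hc2, hfr]
      have hne : α⁻¹ - (pq α 1 : ℝ) ≠ 0 := by rw [← hfr]; exact hfr_ne
      have hαne : α ≠ 0 := h0.ne'
      have key : (pq α 1 : ℝ) * α - 1 = -α * (α⁻¹ - (pq α 1 : ℝ)) := by
        field_simp
        ring
      rw [key, mul_inv_cancel_right₀ hne]
  | succ n ih =>
      have e1 : rr α (n + 2) = (pq α (n + 2) : ℝ) * rr α (n + 1) + rr α n := by
        have hq : (qd α (n + 2) : ℝ)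
            = (pq α (n + 2) : ℝ) * (qd α (n + 1) : ℝ) + (qd α n : ℝ) := by
          rw [qd_two_step]; push_cast; ring
        have hp : (pn α (n + 2) : ℝ)
            = (pq α (n + 2) : ℝ) * (pn α (n + 1) : ℝ) + (pn α n : ℝ) := by
          rw [show pn α (n + 2) = (pq α (n + 2) : ℤ) * pn α (n + 1) + pn α n from rfl]
          push_cast; ring
        unfold rr
        rw [hq, hp]
        ring
      have e2 : rr α n = - (rr α (n + 1) * cq α (n + 2)) := by linarith [ih]
      have e3 : cq α (n + 2) = (pq α (n + 2) : ℝ) + (cq α (n + 3))⁻¹ :=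
        cq_eq hirr h0 h2 (n + 1)
      have hcne : cq α (n + 3) ≠ 0 := (cq_pos hirr h0 h2 (n + 2)).ne'
      have e4 : rr α (n + 2) = - rr α (n + 1) * (cq α (n + 3))⁻¹ := by
        rw [e1, e2, e3]; ring
      rw [e4]
      field_simp

lemma bb_rec (hirr : Irrational α) (h0 : 0 < α) (h2 : α < 1 / 2) (j : ℕ) :
    bb α (j + 1) * cq α (j + 2) = bb α j := by
  unfold bb
  have h := rr_rec hirr h0 h2 j
  calc ((-1 : ℝ) ^ (j + 1) * rr α (j + 1)) * cq α (j + 2)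
      = (-1 : ℝ) ^ (j + 1) * (rr α (j + 1) * cq α (j + 2)) := by ring
    _ = (-1 : ℝ) ^ (j + 1) * (- rr α j) := by rw [h]
    _ = (-1 : ℝ) ^ j * rr α j := by rw [pow_succ]; ring

lemma bb_pos (hirr : Irrational α) (h0 : 0 < α) (h2 : α < 1 / 2) :
    ∀ j, 0 < bb α j := by
  intro j
  induction j with
  | zero => simpa [bb, rr_zero] using h0
  | succ n ih =>
      have h1 := bb_rec hirr h0 h2 n
      have h2' := cq_pos hirr h0 h2 (n + 1)
      nlinarith [mul_pos_iff.mp (h1 ▸ ih)]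

lemma bb_pos' (hirr : Irrational α) (h0 : 0 < α) (h2 : α < 1 / 2) (j : ℕ) :
    0 < bb α (j + 1) := bb_pos hirr h0 h2 (j + 1)

lemma bb_lt (hirr : Irrational α) (h0 : 0 < α) (h2 : α < 1 / 2) (j : ℕ) :
    bb α (j + 1) < bb α j := by
  have h1 := bb_rec hirr h0 h2 j
  have h2' := (cq_prop hirr h0 h2 (j + 1)).2
  nlinarith [bb_pos hirr h0 h2 (j + 1)]

lemma rr_eq_bb (j : ℕ) : rr α j = (-1 : ℝ) ^ j * bb α j := by
  unfold bb
  have : ((-1 : ℝ) ^ j) * ((-1 : ℝ) ^ j) = 1 := by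
    rw [← pow_add]
    exact Even.neg_one_pow ⟨j, rfl⟩
  linear_combination (- rr α j) * this

lemma abs_rr (hirr : Irrational α) (h0 : 0 < α) (h2 : α < 1 / 2) (j : ℕ) :
    |rr α j| = bb α j := by
  rw [rr_eq_bb j, abs_mul, abs_pow, abs_neg, abs_one, one_pow, one_mul]
  exact abs_of_pos (bb_pos hirr h0 h2 j)

lemma detD : ∀ j : ℕ, (qd α j : ℤ) * pn α (j + 1) - (qd α (j + 1) : ℤ) * pn α j = (-1) ^ j := by
  intro j
  induction j with
  | zero => simp [qd_zero, pn]
  | succ n ih =>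
      have hq : (qd α (n + 2) : ℤ) = (pq α (n + 2) : ℤ) * (qd α (n + 1) : ℤ) + (qd α n : ℤ) := by
        rw [qd_two_step]; push_cast; ring
      have hp : pn α (n + 2) = (pq α (n + 2) : ℤ) * pn α (n + 1) + pn α n := rfl
      rw [hq, hp, pow_succ]
      linear_combination (-1 : ℤ) * ih

lemma ident (hirr : Irrational α) (h0 : 0 < α) (h2 : α < 1 / 2) (j : ℕ) :
    (qd α (j + 1) : ℝ) * bb α j + (qd α j : ℝ) * bb α (j + 1) = 1 := by
  have hdet : (qd α j : ℝ) * (pn α (j + 1) : ℝ) - (qd α (j + 1) : ℝ) * (pn α j : ℝ)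
      = (-1 : ℝ) ^ j := by
    exact_mod_cast congrArg (Int.cast : ℤ → ℝ) (detD j)
  have hsq : ((-1 : ℝ) ^ j) * ((-1 : ℝ) ^ j) = 1 := by
    rw [← pow_add]
    exact Even.neg_one_pow ⟨j, rfl⟩
  unfold bb rr
  rw [pow_succ]
  linear_combination ((-1 : ℝ) ^ j) * hdet + hsq

lemma q1b (hirr : Irrational α) (h0 : 0 < α) (h2 : α < 1 / 2) (j : ℕ) :
    (qd α (j + 1) : ℝ) * bb α j < 1 := by
  have h1 := ident hirr h0 h2 j
  have h2' := bb_pos hirr h0 h2 (j + 1)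
  have h3 : (0 : ℝ) < (qd α j : ℝ) := by
    exact_mod_cast qd_pos hirr h0 h2 j
  nlinarith

end Aux2
section Aux3

variable {α : ℝ}

lemma ba (hirr : Irrational α) (h0 : 0 < α) (h2 : α < 1 / 2) (j : ℕ) (m : ℕ) (c : ℤ)
    (hm : 0 < m) (hmq : m < qd α (j + 1)) :
    (∃ x : ℕ, 0 < x ∧ m = x * qd α j ∧ |(m : ℝ) * α - c| = (x : ℝ) * bb α j) ∨
    bb α j + bb α (j + 1) ≤ |(m : ℝ) * α - c| := by
  set x : ℤ := (-1) ^ j * ((m : ℤ) * pn α (j + 1) - c * (qd α (j + 1) : ℤ)) with hxdef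
  set y : ℤ := (-1) ^ j * (c * (qd α j : ℤ) - (m : ℤ) * pn α j) with hydef
  have hdet' : ((-1 : ℤ) ^ j) * ((qd α j : ℤ) * pn α (j + 1) - (qd α (j + 1) : ℤ) * pn α j)
      = 1 := by
    rw [detD, ← pow_add]
    exact Even.neg_one_pow ⟨j, rfl⟩
  have hxy1 : x * (qd α j : ℤ) + y * (qd α (j + 1) : ℤ) = m := by
    rw [hxdef, hydef]
    linear_combination (m : ℤ) * hdet'
  have hxy2 : x * pn α j + y * pn α (j + 1) = c := by
    rw [hxdef, hydef]
    linear_combination c * hdet'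
  clear_value x y
  clear hxdef hydef
  have hxy1R : (x : ℝ) * (qd α j : ℝ) + (y : ℝ) * (qd α (j + 1) : ℝ) = (m : ℝ) := by
    exact_mod_cast congrArg (Int.cast : ℤ → ℝ) hxy1
  have hxy2R : (x : ℝ) * (pn α j : ℝ) + (y : ℝ) * (pn α (j + 1) : ℝ) = (c : ℝ) := by
    exact_mod_cast congrArg (Int.cast : ℤ → ℝ) hxy2
  have hval : (m : ℝ) * α - c = (x : ℝ) * rr α j + (y : ℝ) * rr α (j + 1) := by
    unfold rr
    linear_combination hxy2R - α * hxy1R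
  have hqjpos : (0 : ℤ) < (qd α j : ℤ) := by exact_mod_cast qd_pos hirr h0 h2 j
  have hqj1pos : (0 : ℤ) < (qd α (j + 1) : ℤ) := by
    exact_mod_cast qd_pos hirr h0 h2 (j + 1)
  have hmZ : (0 : ℤ) < (m : ℤ) := by exact_mod_cast hm
  have hmqZ : (m : ℤ) < (qd α (j + 1) : ℤ) := by exact_mod_cast hmq
  rcases eq_or_ne y 0 with hy | hy
  · left
    rw [hy] at hxy1
    simp at hxy1
    have hx : 0 < x := by nlinarith
    refine ⟨x.toNat, by omega, ?_, ?_⟩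
    · have hxt : (x.toNat : ℤ) = x := Int.toNat_of_nonneg hx.le
      have hmm : (m : ℤ) = (x.toNat : ℤ) * (qd α j : ℤ) := by rw [hxt]; linarith
      exact_mod_cast hmm
    · rw [hval, hy]
      push_cast
      rw [zero_mul, add_zero, abs_mul, abs_rr hirr h0 h2 j]
      have hxa : |(x : ℝ)| = ((x.toNat : ℕ) : ℝ) := by
        rw [abs_of_pos (by exact_mod_cast hx : (0:ℝ) < (x:ℝ))]
        exact_mod_cast (Int.toNat_of_nonneg hx.le).symm
      rw [hxa]
  · right
    have hx : x ≠ 0 := by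
      intro hx0
      rw [hx0] at hxy1
      simp at hxy1
      rcases lt_trichotomy y 0 with h | h | h
      · nlinarith
      · exact hy h
      · nlinarith
    have hxy : x * y < 0 := by
      rcases lt_trichotomy x 0 with hxn | hx0 | hxp
      · rcases lt_trichotomy y 0 with hyn | hy0 | hyp
        · exfalso; nlinarith
        · exact absurd hy0 hy
        · exact mul_neg_of_neg_of_pos hxn hyp
      · exact absurd hx0 hx
      · rcases lt_trichotomy y 0 with hyn | hy0 | hyp
        · exact mul_neg_of_pos_of_neg hxp hyn
        · exact absurd hy0 hy
        · exfalso; nlinarith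
    have hsqR : ((-1 : ℝ) ^ j) * ((-1 : ℝ) ^ j) = 1 := by
      rw [← pow_add]
      exact Even.neg_one_pow ⟨j, rfl⟩
    have hrrprod : rr α j * rr α (j + 1) = -(bb α j * bb α (j + 1)) := by
      rw [rr_eq_bb j, rr_eq_bb (j + 1), pow_succ]
      linear_combination (- (bb α j * bb α (j + 1))) * hsqR
    have hbj := bb_pos hirr h0 h2 j
    have hbj1 := bb_pos hirr h0 h2 (j + 1)
    have habspos : (0 : ℝ) < ((x : ℝ) * rr α j) * ((y : ℝ) * rr α (j + 1)) := by
      have h1 : ((x : ℝ) * rr α j) * ((y : ℝ) * rr α (j + 1))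
          = ((x * y : ℤ) : ℝ) * (rr α j * rr α (j + 1)) := by push_cast; ring
      have h2' : ((x * y : ℤ) : ℝ) < 0 := by exact_mod_cast hxy
      rw [h1, hrrprod]
      exact mul_pos_of_neg_of_neg h2' (by nlinarith)
    have hax : bb α j ≤ |(x : ℝ) * rr α j| := by
      rw [abs_mul, abs_rr hirr h0 h2 j]
      have h3 : (1 : ℝ) ≤ |(x : ℝ)| := by
        rw [← Int.cast_abs]
        exact_mod_cast Int.one_le_abs hx
      nlinarith
    have hay : bb α (j + 1) ≤ |(y : ℝ) * rr α (j + 1)| := by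
      rw [abs_mul, abs_rr hirr h0 h2 (j + 1)]
      have h3 : (1 : ℝ) ≤ |(y : ℝ)| := by
        rw [← Int.cast_abs]
        exact_mod_cast Int.one_le_abs hy
      nlinarith
    rw [hval]
    rcases mul_pos_iff.mp habspos with ⟨ha, hb⟩ | ⟨ha, hb⟩
    · rw [abs_of_pos (by linarith)]
      rw [abs_of_pos ha] at hax
      rw [abs_of_pos hb] at hay
      linarith
    · rw [abs_of_neg (by linarith)]
      rw [abs_of_neg ha] at hax
      rw [abs_of_neg hb] at hay
      linarith

set_option maxHeartbeats 1000000 in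
lemma key (hirr : Irrational α) (h0 : 0 < α) (h2 : α < 1 / 2) (k : ℕ) (m : ℕ) (c : ℤ)
    (hm : 0 < m) (hmq : m < qd α (k + 1)) :
    (m : ℝ) ≤ ((qd α (k + 1) : ℝ) * (qd α (k + 2) : ℝ) - 2 * m + 2) * |(m : ℝ) * α - c| := by
  have hq0R : (1 : ℝ) ≤ (qd α k : ℝ) := by exact_mod_cast qd_pos hirr h0 h2 k
  have hq1R : (qd α k : ℝ) + 1 ≤ (qd α (k + 1) : ℝ) := by
    exact_mod_cast qd_lt hirr h0 h2 k
  have hq2R : (qd α (k + 1) : ℝ) + 1 ≤ (qd α (k + 2) : ℝ) := by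
    exact_mod_cast qd_lt hirr h0 h2 (k + 1)
  have hq4 : (qd α (k + 1) : ℝ) + (qd α k : ℝ) ≤ (qd α (k + 2) : ℝ) := by
    have h5 : qd α (k + 1) + qd α k ≤ qd α (k + 2) := by
      rw [qd_two_step]
      have := pq_pos hirr h0 h2 (k + 1)
      nlinarith
    exact_mod_cast h5
  have hmR : (1 : ℝ) ≤ (m : ℝ) := by exact_mod_cast hm
  have hmR2 : (m : ℝ) + 1 ≤ (qd α (k + 1) : ℝ) := by exact_mod_cast hmq
  have hbk := bb_pos hirr h0 h2 k
  have hbk1 := bb_pos hirr h0 h2 (k + 1)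
  have hident := ident hirr h0 h2 k
  have hblt := bb_lt hirr h0 h2 k
  rcases ba hirr h0 h2 k m c hm hmq with ⟨x, hx, hmx, habs⟩ | hge
  · -- aligned case
    have hxR : (1 : ℝ) ≤ (x : ℝ) := by exact_mod_cast hx
    have hmxR : (m : ℝ) = (x : ℝ) * (qd α k : ℝ) := by exact_mod_cast hmx
    rw [habs]
    set Q1 : ℝ := (qd α (k + 1) : ℝ) with hQ1def
    set Q2 : ℝ := (qd α (k + 2) : ℝ) with hQ2def
    set q0 : ℝ := (qd α k : ℝ) with hq0def
    set B0 : ℝ := bb α k with hB0def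
    set B1 : ℝ := bb α (k + 1) with hB1def
    set mr : ℝ := (m : ℝ) with hmrdef
    clear_value Q1 Q2 q0 B0 B1 mr
    set t : ℝ := B0 / B1 with htdef
    have ht1 : 1 < t := (one_lt_div hbk1).mpr hblt
    have hbbk1' : B0 = t * B1 := (div_mul_cancel₀ _ hbk1.ne').symm
    have hbbid : B0 * (t * Q1 + q0) = t := by
      linear_combination t * hident + q0 * hbbk1'
    clear_value t
    set C : ℝ := Q1 * Q2 - 2 * mr + 2 with hCdef
    have hinner : Q1 * Q1 - 2 * mr + 2 ≤ C - q0 * Q1 := by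
      rw [hCdef]; nlinarith
    have hinnerpos : (0 : ℝ) < Q1 * Q1 - 2 * mr + 2 := by nlinarith
    have hinner2 : (0 : ℝ) < C - q0 * Q1 := by linarith
    have h7 : q0 * q0 < Q1 * Q1 - 2 * mr + 2 := by
      have e1 : (0:ℝ) ≤ (Q1 - 1 - q0) * (Q1 - 1 + q0) :=
        mul_nonneg (by linarith) (by linarith)
      nlinarith [e1]
    have hmain : q0 * q0 < t * (C - q0 * Q1) := by
      have h8 := mul_lt_mul_of_pos_right ht1 hinner2
      rw [one_mul] at h8
      nlinarith [h7, hinner, h8]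
    have hden : (0 : ℝ) < t * Q1 + q0 := by nlinarith
    have hsub : q0 ≤ C * B0 := by
      by_contra hcon
      push_neg at hcon
      have h5 : q0 * (t * Q1 + q0) < C * t := by nlinarith [hmain]
      have h6 : C * B0 * (t * Q1 + q0) < q0 * (t * Q1 + q0) :=
        mul_lt_mul_of_pos_right hcon hden
      have h7' : C * B0 * (t * Q1 + q0) = C * t := by rw [mul_assoc, hbbid]
      linarith
    calc mr = (x : ℝ) * q0 := hmxR
      _ ≤ (x : ℝ) * (C * B0) := by
          apply mul_le_mul_of_nonneg_left hsub (by linarith)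
      _ = C * ((x : ℝ) * B0) := by ring
  · -- non-aligned case
    set Q1 : ℝ := (qd α (k + 1) : ℝ) with hQ1def
    set Q2 : ℝ := (qd α (k + 2) : ℝ) with hQ2def
    set q0 : ℝ := (qd α k : ℝ) with hq0def
    set B0 : ℝ := bb α k with hB0def
    set B1 : ℝ := bb α (k + 1) with hB1def
    set mr : ℝ := (m : ℝ) with hmrdef
    set D : ℝ := |(m : ℝ) * α - c| with hDdef
    clear_value Q1 Q2 q0 B0 B1 mr D
    have hB : 1 < Q1 * (B0 + B1) := by
      have e := mul_pos (show (0:ℝ) < Q1 - q0 by linarith) hbk1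
      nlinarith [e]
    have hC : mr * Q1 ≤ Q1 * Q2 - 2 * mr + 2 := by
      have e1 : (0:ℝ) ≤ (Q1 - 1 - mr) * (Q1 + 2) :=
        mul_nonneg (by linarith) (by linarith)
      have e2 : (0:ℝ) ≤ Q1 * (Q2 - Q1 - 1) :=
        mul_nonneg (by linarith) (by linarith)
      nlinarith [e1, e2]
    have habs0 : (0 : ℝ) ≤ D := hDdef ▸ abs_nonneg _
    have hCpos : (0:ℝ) < Q1 * Q2 - 2 * mr + 2 := by
      nlinarith [hC, mul_pos (show (0:ℝ) < mr by linarith) (show (0:ℝ) < Q1 by linarith)]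
    calc mr ≤ mr * (Q1 * (B0 + B1)) := by
          have e := mul_lt_mul_of_pos_left hB (show (0:ℝ) < mr by linarith)
          rw [mul_one] at e
          linarith
      _ = (mr * Q1) * (B0 + B1) := by ring
      _ ≤ (Q1 * Q2 - 2 * mr + 2) * (B0 + B1) := by
          apply mul_le_mul_of_nonneg_right hC (by linarith)
      _ ≤ (Q1 * Q2 - 2 * mr + 2) * D := by
          apply mul_le_mul_of_nonneg_left hge hCpos.le

end Aux3
section Aux4

variable {α : ℝ}

lemma lower_step (h0 : 0 < α) (h1 : α < 1) (ρ : ℝ) (n : ℕ) :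
    ⌊ρ + ((n + 1 : ℕ) : ℝ) * α⌋
      = ⌊ρ + (n : ℝ) * α⌋ + (if lowerWord α ρ n then 1 else 0) := by
  have hx : ρ + ((n + 1 : ℕ) : ℝ) * α = (ρ + (n : ℝ) * α) + α := by push_cast; ring
  rw [hx]
  set x : ℝ := ρ + (n : ℝ) * α with hxdef
  have hfl := Int.floor_add_fract x
  have hfr0 := Int.fract_nonneg x
  have hfr1 := Int.fract_lt_one x
  unfold lowerWord
  by_cases hc : 1 - α ≤ Int.fract (ρ + (n : ℝ) * α)
  · rw [if_pos hc]
    simp only [if_true]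
    rw [← hxdef] at hc
    have : ⌊x + α⌋ = ⌊x⌋ + 1 := by
      rw [Int.floor_eq_iff]
      constructor
      · push_cast; linarith
      · push_cast; linarith
    omega
  · rw [if_neg hc]
    norm_num
    rw [← hxdef] at hc
    push_neg at hc
    have : ⌊x + α⌋ = ⌊x⌋ := by
      rw [Int.floor_eq_iff]
      constructor
      · push_cast; linarith
      · push_cast; linarith
    omega

lemma count_seg (h0 : 0 < α) (h1 : α < 1) (ρ : ℝ) (d n : ℕ) :
    (((List.range n).map (fun j => lowerWord α ρ (d + j))).count true : ℤ)
      = ⌊ρ + ((d + n : ℕ) : ℝ) * α⌋ - ⌊ρ + ((d : ℕ) : ℝ) * α⌋ := by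
  induction n with
  | zero => simp
  | succ n ih =>
      rw [List.range_succ, List.map_append, List.count_append]
      have hstep := lower_step h0 h1 ρ (d + n)
      push_cast at hstep ih ⊢
      ring_nf at hstep ih ⊢
      rcases hb : lowerWord α ρ (d + n) <;>
        simp [hb, List.count_cons, List.count_nil] at hstep ⊢ <;>
        linarith [ih, hstep]

lemma seg_eq (s : ℕ → Bool) (L d n : ℕ) (h : d + n ≤ L) :
    (((List.range L).map s).drop d).take n = (List.range n).map (fun j => s (d + j)) := by
  apply List.ext_getElem
  · simp; omega
  · intro i h1 h2
    simp only [List.getElem_take, List.getElem_drop, List.getElem_map, List.getElem_range]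

end Aux4
section Aux5

variable {α : ℝ}

lemma rho_exists (hirr : Irrational α) (h0 : 0 < α) (h2 : α < 1 / 2) (k : ℕ) :
    ∃ ρ : ℝ, 0 ≤ ρ ∧ ρ < 1 ∧
      ∀ j : ℕ, j ≤ qd α (k + 1) → ⌊ρ + (j : ℝ) * rr α k⌋ = 0 := by
  have hb := bb_pos hirr h0 h2 k
  have hq := q1b hirr h0 h2 k
  rcases le_or_gt 0 (rr α k) with hsgn | hsgn
  · have hrb : rr α k = bb α k := by
      rw [← abs_rr hirr h0 h2 k, abs_of_nonneg hsgn]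
    refine ⟨0, le_refl _, one_pos, fun j hj => ?_⟩
    rw [zero_add, Int.floor_eq_zero_iff]
    constructor
    · exact mul_nonneg (by positivity) hsgn
    · have hjle : (j : ℝ) ≤ (qd α (k + 1) : ℝ) := by exact_mod_cast hj
      calc (j : ℝ) * rr α k = (j : ℝ) * bb α k := by rw [hrb]
        _ ≤ (qd α (k + 1) : ℝ) * bb α k := mul_le_mul_of_nonneg_right hjle hb.le
        _ < 1 := hq
  · have hrb : rr α k = - bb α k := by
      rw [← abs_rr hirr h0 h2 k, abs_of_neg hsgn]
      ring
    refine ⟨(qd α (k + 1) : ℝ) * bb α k, mul_nonneg (by positivity) hb.le, hq,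
      fun j hj => ?_⟩
    have hjle : (j : ℝ) ≤ (qd α (k + 1) : ℝ) := by exact_mod_cast hj
    have he : (qd α (k + 1) : ℝ) * bb α k + (j : ℝ) * rr α k
        = ((qd α (k + 1) : ℝ) - (j : ℝ)) * bb α k := by
      rw [hrb]; ring
    rw [he, Int.floor_eq_zero_iff]
    constructor
    · exact mul_nonneg (by linarith) hb.le
    · have h3 : ((qd α (k + 1) : ℝ) - (j : ℝ)) * bb α k
          ≤ (qd α (k + 1) : ℝ) * bb α k := by nlinarith [hb]
      linarith

lemma upper_bound (hirr : Irrational α) (h0 : 0 < α) (h2 : α < 1 / 2) (k : ℕ) (ρ : ℝ)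
    (hfl : ∀ j : ℕ, j ≤ qd α (k + 1) → ⌊ρ + (j : ℝ) * rr α k⌋ = 0) :
    HasAbPeriod ((List.range (qd α k * qd α (k + 1))).map (lowerWord α ρ)) (qd α k) := by
  have h1 : α < 1 := by linarith
  set Q1 := qd α k with hQ1
  set Q2 := qd α (k + 1) with hQ2
  set L := Q1 * Q2 with hL
  set w := (List.range L).map (lowerWord α ρ) with hw
  have hwlen : w.length = L := by rw [hw]; simp
  have hSmul : ∀ j : ℕ, j ≤ Q2 → ⌊ρ + ((j * Q1 : ℕ) : ℝ) * α⌋ = j * pn α k := by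
    intro j hj
    have e : ρ + ((j * Q1 : ℕ) : ℝ) * α
        = ((j * pn α k : ℤ) : ℝ) + (ρ + (j : ℝ) * rr α k) := by
      have hrr : rr α k = (Q1 : ℝ) * α - (pn α k : ℝ) := rfl
      rw [hrr]; push_cast; ring
    rw [e, Int.floor_intCast_add, hfl j hj, add_zero]
  have hle : ∀ i : ℕ, i < Q2 → i * Q1 + Q1 ≤ L := by
    intro i hi
    have h3 : (i + 1) * Q1 ≤ Q2 * Q1 := Nat.mul_le_mul_right _ (by omega)
    calc i * Q1 + Q1 = (i + 1) * Q1 := by ring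
      _ ≤ Q2 * Q1 := h3
      _ = L := by rw [hL]; ring
  have hcnt : ∀ i : ℕ, i < Q2 → (((w.drop (i * Q1)).take Q1).count true : ℤ) = pn α k := by
    intro i hi
    rw [hw, seg_eq _ L _ _ (hle i hi), count_seg h0 h1 ρ _ _]
    have e1 := hSmul (i + 1) (by omega)
    have e2 := hSmul i hi.le
    rw [show i * Q1 + Q1 = (i + 1) * Q1 by ring, e1, e2]
    push_cast; ring
  refine ⟨Q2, w, ⟨qd_pos hirr h0 h2 k, qd_ge_two hirr h0 h2 k,
    by rw [hwlen, hL]; ring, ?_⟩, List.infix_refl w⟩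
  intro i hi j hj
  constructor
  · have h4 := hle i hi
    have h5 := hle j hj
    simp only [List.length_take, List.length_drop, hwlen]
    omega
  · have e1 := hcnt i hi
    have e2 := hcnt j hj
    exact_mod_cast e1.trans e2.symm

end Aux5
section Aux6

variable {α : ℝ}

set_option maxHeartbeats 1000000 in
lemma lower_bound (hirr : Irrational α) (h0 : 0 < α) (h2 : α < 1 / 2) (K : ℕ) (ρ : ℝ)
    (p : ℕ)
    (hp : HasAbPeriod ((List.range (qd α (K + 1) * qd α (K + 2))).map (lowerWord α ρ)) p)
    (hcon : p < qd α (K + 1)) : False := by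
  have h1 : α < 1 := by linarith
  set Q1 := qd α (K + 1) with hQ1
  set Q2 := qd α (K + 2) with hQ2
  set L := Q1 * Q2 with hL
  set w := (List.range L).map (lowerWord α ρ) with hw
  have hwlen : w.length = L := by rw [hw]; simp
  obtain ⟨e, u, ⟨hp1, he2, hlen, hblk⟩, hinf⟩ := hp
  obtain ⟨s', t', hu⟩ := hinf
  set i := s'.length with hidef
  have hppos : 0 < p := hp1
  have hQ2ge2 : 2 ≤ Q2 := qd_ge_two hirr h0 h2 (K + 1)
  have hL2 : 2 * (p + 1) ≤ L := by
    rw [hL]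
    calc 2 * (p + 1) = (p + 1) * 2 := by ring
      _ ≤ Q1 * Q2 := Nat.mul_le_mul (by omega) hQ2ge2
  -- alignment offset
  set d0 : ℕ := (p - i % p) % p with hd0def
  have hd0 : d0 < p := Nat.mod_lt _ hppos
  have hdvd : (i + d0) % p = 0 := by
    rcases Nat.eq_zero_or_pos (i % p) with h | h
    · rw [hd0def, h, Nat.sub_zero, Nat.mod_self, Nat.add_zero, h]
    · have h2' : i % p < p := Nat.mod_lt _ hppos
      have hd0' : d0 = p - i % p := by
        rw [hd0def]
        exact Nat.mod_eq_of_lt (by omega)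
      rw [hd0', Nat.add_mod, Nat.mod_eq_of_lt (show p - i % p < p by omega)]
      have h3 : i % p + (p - i % p) = p := by omega
      rw [h3, Nat.mod_self]
  set b0 : ℕ := (i + d0) / p with hb0def
  have hb0 : b0 * p = i + d0 := Nat.div_mul_cancel (Nat.dvd_of_mod_eq_zero hdvd)
  set F : ℕ := (L - d0) / p with hFdef
  set M : ℕ := (L - d0) % p with hMdef
  have hdm : p * F + M = L - d0 := Nat.div_add_mod (L - d0) p
  have hM : M < p := Nat.mod_lt _ hppos
  have hd0L : d0 ≤ L := by omega
  have hPF : p * F + M + d0 = L := by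
    have h4 : (p * F + M) + d0 = (L - d0) + d0 := congrArg (· + d0) hdm
    have h5 : (L - d0) + d0 = L := Nat.sub_add_cancel hd0L
    omega
  have hulen : i + L ≤ e * p := by
    have h3 : i + L + t'.length = u.length := by
      rw [← hu]
      simp [hidef, hwlen]
      omega
    exact Nat.le.intro (h3.trans hlen)
  have hF1 : 1 ≤ F := by
    rcases Nat.eq_zero_or_pos F with h | h
    · rw [h, Nat.mul_zero] at hPF; omega
    · exact h
  have hdpF : d0 + p * F ≤ L := by
    calc d0 + p * F ≤ d0 + p * F + M := Nat.le_add_right _ _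
      _ = p * F + M + d0 := by ring
      _ = L := hPF
  have hjP : ∀ j : ℕ, j < F → d0 + j * p + p ≤ L := by
    intro j hj
    have h3 : (j + 1) * p ≤ F * p := Nat.mul_le_mul_right _ (by omega)
    calc d0 + j * p + p = d0 + (j + 1) * p := by ring
      _ ≤ d0 + F * p := Nat.add_le_add_left h3 d0
      _ = d0 + p * F := by ring
      _ ≤ L := hdpF
  have hbe : ∀ j : ℕ, j < F → b0 + j < e := by
    intro j hj
    have h3' : (j + 1) * p ≤ F * p := Nat.mul_le_mul_right _ (by omega)
    have h3 : (b0 + j + 1) * p ≤ e * p := by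
      calc (b0 + j + 1) * p = b0 * p + (j + 1) * p := by ring
        _ ≤ (i + d0) + F * p := by
            rw [hb0]
            exact Nat.add_le_add_left h3' _
        _ = i + (d0 + p * F) := by ring
        _ ≤ i + L := Nat.add_le_add_left hdpF i
        _ ≤ e * p := hulen
    have h7 := Nat.le_of_mul_le_mul_right h3 hppos
    omega
  have hcontent : ∀ j : ℕ, j < F →
      (u.drop ((b0 + j) * p)).take p = (w.drop (d0 + j * p)).take p := by
    intro j hj
    have e1 : (b0 + j) * p = i + (d0 + j * p) := by
      have h3 : (b0 + j) * p = b0 * p + j * p := by ring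
      rw [h3, hb0]
      ring
    have e2 : u.drop ((b0 + j) * p) = (w ++ t').drop (d0 + j * p) := by
      rw [← hu, List.append_assoc, e1, hidef]
      simp [List.drop_append]
    rw [e2]
    have hdjL : d0 + j * p ≤ L := le_trans (Nat.le_add_right _ p) (hjP j hj)
    have e3 : (w ++ t').drop (d0 + j * p) = w.drop (d0 + j * p) ++ t' := by
      rw [List.drop_append]
      rw [show d0 + j * p - w.length = 0 by rw [hwlen]; omega, List.drop_zero]
    rw [e3]
    apply List.take_append_of_le_length
    have h5 := hjP j hj
    simp only [List.length_drop, hwlen]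
    omega
  set c0 : ℕ := ((u.drop (b0 * p)).take p).count true with hc0def
  have hcnt : ∀ j : ℕ, j < F →
      (((w.drop (d0 + j * p)).take p).count true : ℤ) = (c0 : ℤ) := by
    intro j hj
    have hb0e : b0 < e := by have := hbe 0 (by omega); omega
    have habe := hblk (b0 + j) (hbe j hj) b0 hb0e
    have h3 := habe.2
    rw [hcontent j hj] at h3
    exact_mod_cast h3
  have hcount : ∀ d n : ℕ, d + n ≤ L →
      (((w.drop d).take n).count true : ℤ)
        = ⌊ρ + ((d + n : ℕ) : ℝ) * α⌋ - ⌊ρ + ((d : ℕ) : ℝ) * α⌋ := by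
    intro d n hdn
    rw [hw, seg_eq _ L _ _ hdn]
    exact count_seg h0 h1 ρ d n
  have hS : ∀ j : ℕ, j ≤ F →
      ⌊ρ + ((d0 + j * p : ℕ) : ℝ) * α⌋ = ⌊ρ + ((d0 : ℕ) : ℝ) * α⌋ + (j : ℤ) * (c0 : ℤ) := by
    intro j
    induction j with
    | zero => intro _; simp
    | succ n ih =>
        intro hj
        have h3 := hcnt n (by omega)
        rw [hcount (d0 + n * p) p (by have := hjP n (by omega); omega)] at h3
        have h4 : d0 + n * p + p = d0 + (n + 1) * p := by ring
        rw [h4] at h3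
        have h5 := ih (by omega)
        push_cast at h3 h5 ⊢
        linarith
  have hSF := hS F le_rfl
  have hb1 : ((⌊ρ + ((d0 : ℕ) : ℝ) * α⌋ : ℤ) : ℝ) ≤ ρ + ((d0 : ℕ) : ℝ) * α :=
    Int.floor_le _
  have hb2 : ρ + ((d0 : ℕ) : ℝ) * α < ((⌊ρ + ((d0 : ℕ) : ℝ) * α⌋ : ℤ) : ℝ) + 1 :=
    Int.lt_floor_add_one _
  have hb3 : ((⌊ρ + ((d0 : ℕ) : ℝ) * α⌋ + (F : ℤ) * (c0 : ℤ) : ℤ) : ℝ)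
      ≤ ρ + ((d0 + F * p : ℕ) : ℝ) * α := by
    rw [← hSF]
    exact Int.floor_le _
  have hb4 : ρ + ((d0 + F * p : ℕ) : ℝ) * α
      < ((⌊ρ + ((d0 : ℕ) : ℝ) * α⌋ + (F : ℤ) * (c0 : ℤ) : ℤ) : ℝ) + 1 := by
    rw [← hSF]
    exact Int.lt_floor_add_one _
  have hdiff : |(F : ℝ) * ((p : ℝ) * α - (c0 : ℝ))| < 1 := by
    rw [abs_lt]
    push_cast at hb1 hb2 hb3 hb4 ⊢
    constructor <;> nlinarith [hb1, hb2, hb3, hb4]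
  have hkey := key hirr h0 h2 K p (c0 : ℤ) hppos hcon
  push_cast at hkey
  have hLR : ((Q1 : ℝ) * (Q2 : ℝ)) = (L : ℝ) := by rw [hL]; push_cast; ring
  have hFpR : (L : ℝ) - 2 * p + 2 ≤ (F : ℝ) * p := by
    have h3 : (p : ℝ) * F + (M : ℝ) + (d0 : ℝ) = (L : ℝ) := by exact_mod_cast hPF
    have h4 : (M : ℝ) + 1 ≤ (p : ℝ) := by exact_mod_cast hM
    have h5 : (d0 : ℝ) + 1 ≤ (p : ℝ) := by exact_mod_cast hd0
    linarith
  have habs : (0 : ℝ) ≤ |(p : ℝ) * α - (c0 : ℝ)| := abs_nonneg _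
  have h9 : (p : ℝ) ≤ ((F : ℝ) * p) * |(p : ℝ) * α - (c0 : ℝ)| := by
    calc (p : ℝ) ≤ ((Q1 : ℝ) * (Q2 : ℝ) - 2 * p + 2) * |(p : ℝ) * α - (c0 : ℝ)| := hkey
      _ ≤ ((F : ℝ) * p) * |(p : ℝ) * α - (c0 : ℝ)| := by
          apply mul_le_mul_of_nonneg_right _ habs
          rw [hLR]
          exact hFpR
  have h10 : ((F : ℝ) * p) * |(p : ℝ) * α - (c0 : ℝ)|
      = (p : ℝ) * |(F : ℝ) * ((p : ℝ) * α - (c0 : ℝ))| := by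
    rw [abs_mul, abs_of_nonneg (by positivity : (0 : ℝ) ≤ (F : ℝ))]
    ring
  have hppR : (0 : ℝ) < (p : ℝ) := by exact_mod_cast hppos
  nlinarith [h9, h10, hdiff, hppR, mul_lt_mul_of_pos_left hdiff hppR]

end Aux6
theorem convergent_denominator_is_minimum_abelian_period
    (α : ℝ) (hirr : Irrational α) (h0 : 0 < α) (h2 : α < 1 / 2) (k : ℕ) :
    ∃ w : List Bool, w ≠ [] ∧ IsFactor α w ∧ MinAbPeriod w (qd α k) := by
  obtain ⟨ρ, hρ0, hρ1, hfl⟩ := rho_exists hirr h0 h2 k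
  set w := (List.range (qd α k * qd α (k + 1))).map (lowerWord α ρ) with hw
  have hwlen : w.length = qd α k * qd α (k + 1) := by rw [hw]; simp
  have hupper := upper_bound hirr h0 h2 k ρ hfl
  refine ⟨w, ?_, ?_, ?_⟩
  · -- nonempty
    intro hnil
    have h3 : w.length = 0 := by rw [hnil]; rfl
    rw [hwlen] at h3
    have h4 := Nat.mul_pos (qd_pos hirr h0 h2 k) (qd_pos hirr h0 h2 (k + 1))
    omega
  · -- IsFactor
    refine ⟨lowerWord α ρ, ⟨ρ, hρ0, hρ1, Or.inl rfl⟩, 0, ?_⟩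
    rw [hwlen, hw]
    symm
    apply List.map_congr_left
    intro a _
    rw [Nat.zero_add]
  · constructor
    · exact hupper
    · intro p hp
      obtain ⟨e, u, hiap, hinf⟩ := hp
      have hp1 : 1 ≤ p := hiap.1
      by_contra hcl
      push_neg at hcl
      cases k with
      | zero =>
          have : qd α 0 = 1 := qd_zero
          omega
      | succ K => exact lower_bound hirr h0 h2 K ρ p ⟨e, u, hiap, hinf⟩ hcl

end SturmianAbelian
end
end

section
/- Let α be an irrational real number with 0 < α < 1/2 and let m be a positive integer. Then for every integer e ≥ 2, there exists a factor of slope α that is an abelian power of period m and exponent e if and only if e ≤ ⌊1/‖mα‖⌋. -/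
open scoped Classical

noncomputable section

namespace SturmianAbelian

/-! ### Auxiliary lemmas for the proof -/

/-- Block counting function: `Fblk c β j = ⌊c+(j+1)β⌋ - ⌊c+jβ⌋`. -/
private def Fblk (c β : ℝ) (j : ℕ) : ℤ := ⌊c + ((j:ℝ)+1)*β⌋ - ⌊c + (j:ℝ)*β⌋

private lemma fract_pos_of_irrational {x : ℝ} (h : Irrational x) : 0 < Int.fract x := by
  rcases (Int.fract_nonneg x).lt_or_eq with h' | h'
  · exact h'
  · exfalso
    have hx : x = (⌊x⌋ : ℝ) := by
      have h2 : Int.fract x = x - ⌊x⌋ := rfl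
      rw [h2] at h'
      linarith
    exact (h.ne_int ⌊x⌋) hx

private lemma Fblk_eq (c β : ℝ) (j : ℕ) :
    Fblk c β j = ⌊β⌋ + ⌊Int.fract (c + (j:ℝ)*β) + Int.fract β⌋ := by
  unfold Fblk
  have h1 : c + ((j:ℝ)+1)*β
      = ((⌊c + (j:ℝ)*β⌋ + ⌊β⌋ : ℤ) : ℝ) + (Int.fract (c+(j:ℝ)*β) + Int.fract β) := by
    push_cast
    simp only [Int.fract]
    ring
  rw [h1, Int.floor_intCast_add]
  ring

private lemma fract_succ (c β : ℝ) (j : ℕ) :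
    Int.fract (c + ((j:ℝ)+1)*β) = Int.fract (Int.fract (c + (j:ℝ)*β) + Int.fract β) := by
  rw [Int.fract_eq_fract]
  refine ⟨⌊c + (j:ℝ)*β⌋ + ⌊β⌋, ?_⟩
  simp only [Int.fract]
  push_cast
  ring

private lemma core_fwd (β c : ℝ) (hγ : 0 < Int.fract β) (e : ℕ) (he : 2 ≤ e)
    (h : ∀ j < e, Fblk c β j = Fblk c β 0) :
    (e:ℝ) * min (Int.fract β) (1 - Int.fract β) < 1 := by
  set γ := Int.fract β with hγdef
  have hγ1 : γ < 1 := Int.fract_lt_one β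
  set x : ℕ → ℝ := fun j => Int.fract (c + (j:ℝ)*β) with hx
  have hx0 : ∀ j, 0 ≤ x j := fun j => Int.fract_nonneg _
  have hx1 : ∀ j, x j < 1 := fun j => Int.fract_lt_one _
  have hF : ∀ j, Fblk c β j = ⌊β⌋ + ⌊x j + γ⌋ := fun j => Fblk_eq c β j
  have hchi : ∀ j < e, ⌊x j + γ⌋ = ⌊x 0 + γ⌋ := by
    intro j hj
    have := h j hj
    rw [hF j, hF 0] at this
    omega
  have hrec : ∀ j, x (j+1) = Int.fract (x j + γ) := by
    intro j
    have := fract_succ c β j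
    simp only [hx]
    push_cast
    exact this
  have he1 : e - 1 < e := by omega
  have hcast : ((e-1:ℕ):ℝ) = (e:ℝ) - 1 := by
    have : 1 ≤ e := by omega
    push_cast [this]
    ring
  have hb : ⌊x 0 + γ⌋ = 0 ∨ ⌊x 0 + γ⌋ = 1 := by
    have h1 : (0:ℝ) ≤ x 0 + γ := by linarith [hx0 0]
    have h2 : x 0 + γ < 2 := by linarith [hx1 0]
    have hb1 : (0:ℤ) ≤ ⌊x 0 + γ⌋ := Int.floor_nonneg.mpr h1
    have hb2 : ⌊x 0 + γ⌋ < 2 := by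
      rw [Int.floor_lt]
      exact_mod_cast h2
    omega
  rcases hb with hb | hb
  · -- all floor indicators 0 : no wrap, x j = x 0 + jγ
    have hlt : ∀ j < e, x j + γ < 1 := by
      intro j hj
      have h1 := hchi j hj
      rw [hb, Int.floor_eq_zero_iff] at h1
      exact h1.2
    have key : ∀ j, j < e → x j = x 0 + (j:ℝ)*γ := by
      intro j hj
      induction j with
      | zero => simp
      | succ n ih =>
        have hn : n < e := by omega
        have hxe : x n = x 0 + (n:ℝ)*γ := ih hn
        rw [hrec n, Int.fract_eq_self.mpr ⟨by linarith [hx0 n, hγ.le], hlt n hn⟩]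
        push_cast
        linarith
    have h1 : x (e-1) = x 0 + ((e-1:ℕ):ℝ)*γ := key (e-1) he1
    have h2 : x (e-1) + γ < 1 := hlt (e-1) he1
    have hfin : (e:ℝ)*γ < 1 := by
      rw [hcast] at h1
      nlinarith [hx0 0]
    have : (e:ℝ) * min γ (1-γ) ≤ (e:ℝ)*γ :=
      mul_le_mul_of_nonneg_left (min_le_left _ _) (by positivity)
    linarith
  · -- all floor indicators 1 : always wrap, x j = x 0 - j(1-γ)
    have hge : ∀ j < e, 1 ≤ x j + γ := by
      intro j hj
      have h1 := hchi j hj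
      rw [hb] at h1
      have := Int.floor_eq_iff.mp h1
      exact_mod_cast this.1
    have key : ∀ j, j < e → x j = x 0 - (j:ℝ)*(1-γ) := by
      intro j hj
      induction j with
      | zero => simp
      | succ n ih =>
        have hn : n < e := by omega
        have hxe : x n = x 0 - (n:ℝ)*(1-γ) := ih hn
        have hw : Int.fract (x n + γ) = x n + γ - 1 := by
          rw [Int.fract_eq_iff]
          exact ⟨by linarith [hge n hn], by linarith [hx1 n], ⟨1, by push_cast; ring⟩⟩
        rw [hrec n, hw]
        push_cast
        linarith
    have h1 : x (e-1) = x 0 - ((e-1:ℕ):ℝ)*(1-γ) := key (e-1) he1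
    have h2 : 1 ≤ x (e-1) + γ := hge (e-1) he1
    have hfin : (e:ℝ)*(1-γ) < 1 := by
      rw [hcast] at h1
      nlinarith [hx1 0]
    have : (e:ℝ) * min γ (1-γ) ≤ (e:ℝ)*(1-γ) :=
      mul_le_mul_of_nonneg_left (min_le_right _ _) (by positivity)
    linarith

private lemma core_bwd (β : ℝ) (hγ : 0 < Int.fract β) (e : ℕ) (he : 2 ≤ e)
    (h : (e:ℝ) * min (Int.fract β) (1 - Int.fract β) < 1) :
    ∃ ρ : ℝ, 0 ≤ ρ ∧ ρ < 1 ∧ ∀ j < e, Fblk ρ β j = Fblk ρ β 0 := by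
  set γ := Int.fract β with hγdef
  have hγ1 : γ < 1 := Int.fract_lt_one β
  have he0 : (0:ℝ) < e := by positivity
  rcases le_total γ (1-γ) with hc | hc
  · have heγ : (e:ℝ)*γ < 1 := by rwa [min_eq_left hc] at h
    refine ⟨0, le_refl 0, one_pos, ?_⟩
    have H : ∀ j < e, Fblk 0 β j = ⌊β⌋ := by
      intro j hj
      have hje : (j:ℝ) + 1 ≤ (e:ℝ) := by exact_mod_cast hj
      have hfr : Int.fract ((0:ℝ) + (j:ℝ)*β) = (j:ℝ)*γ := by
        have h1 : (0:ℝ)+(j:ℝ)*β = (j:ℝ)*γ + ((j*⌊β⌋ : ℤ) : ℝ) := by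
          push_cast
          simp only [hγdef, Int.fract]
          ring
        rw [h1, Int.fract_add_intCast, Int.fract_eq_self.mpr ⟨by positivity, ?_⟩]
        nlinarith
      rw [Fblk_eq, hfr]
      have : ⌊(j:ℝ)*γ + γ⌋ = 0 := by
        rw [Int.floor_eq_zero_iff]
        constructor
        · positivity
        · nlinarith
      rw [this]
      ring
    intro j hj
    rw [H j hj, H 0 (by omega)]
  · have hδ : (e:ℝ)*(1-γ) < 1 := by rwa [min_eq_right hc] at h
    have hδ0 : (0:ℝ) < 1 - γ := by linarith
    refine ⟨(e:ℝ)*(1-γ), by positivity, by linarith, ?_⟩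
    have H : ∀ j < e, Fblk ((e:ℝ)*(1-γ)) β j = ⌊β⌋ + 1 := by
      intro j hj
      have hje : (j:ℝ) + 1 ≤ (e:ℝ) := by exact_mod_cast hj
      have hj0 : (0:ℝ) ≤ (j:ℝ) := Nat.cast_nonneg j
      have hfr : Int.fract ((e:ℝ)*(1-γ) + (j:ℝ)*β) = ((e:ℝ)-(j:ℝ))*(1-γ) := by
        rw [Int.fract_eq_iff]
        refine ⟨by nlinarith, by nlinarith, ⟨j*(1+⌊β⌋), ?_⟩⟩
        push_cast
        simp only [hγdef, Int.fract]
        ring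
      rw [Fblk_eq, hfr]
      have : ⌊((e:ℝ)-(j:ℝ))*(1-γ) + γ⌋ = 1 := by
        rw [Int.floor_eq_iff]
        constructor
        · push_cast
          nlinarith
        · push_cast
          nlinarith
      rw [this]
    intro j hj
    rw [H j hj, H 0 (by omega)]

private lemma block_formula (f : ℕ → Bool) (e m j : ℕ) (hj : j < e) :
    (((List.range (e*m)).map f).drop (j*m)).take m
      = (List.range m).map (fun l => f (j*m + l)) := by
  have hle : j*m + m ≤ e*m := by
    have h1 : (j+1)*m ≤ e*m := Nat.mul_le_mul_right m hj
    calc j*m + m = (j+1)*m := by ring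
    _ ≤ e*m := h1
  apply List.ext_getElem
  · simp
    omega
  · intro n h1 h2
    simp only [List.getElem_take, List.getElem_drop, List.getElem_map, List.getElem_range]

private lemma count_map_range (f : ℕ → Bool) (b : ℕ) :
    ((List.range b).map f).count true = ∑ l ∈ Finset.range b, (if f l then 1 else 0) := by
  induction b with
  | zero => simp
  | succ n ih =>
    rw [List.range_succ, List.map_append, List.count_append, Finset.sum_range_succ, ih]
    cases hf : f n <;> simp [hf]

private lemma step_lower (α ρ : ℝ) (h0 : 0 < α) (h1 : α < 1) (n : ℕ) :
    (if lowerWord α ρ n then (1:ℤ) else 0)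
      = ⌊ρ + ((n:ℝ)+1)*α⌋ - ⌊ρ + (n:ℝ)*α⌋ := by
  have hsplit : ρ + ((n:ℝ)+1)*α
      = ((⌊ρ + (n:ℝ)*α⌋:ℤ):ℝ) + (Int.fract (ρ + (n:ℝ)*α) + α) := by
    simp only [Int.fract]; push_cast; ring
  rw [hsplit, Int.floor_intCast_add]
  have hf0 : 0 ≤ Int.fract (ρ + (n:ℝ)*α) := Int.fract_nonneg _
  have hf1 : Int.fract (ρ + (n:ℝ)*α) < 1 := Int.fract_lt_one _
  by_cases hc : 1 - α ≤ Int.fract (ρ + (n:ℝ)*α)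
  · have hw : ⌊Int.fract (ρ + (n:ℝ)*α) + α⌋ = 1 := by
      rw [Int.floor_eq_iff] <;> constructor
      · push_cast; linarith
      · push_cast; linarith
    simp only [lowerWord, if_pos hc, if_pos rfl, hw]
    simp
  · have hw : ⌊Int.fract (ρ + (n:ℝ)*α) + α⌋ = 0 := by
      push_neg at hc
      rw [Int.floor_eq_zero_iff, Set.mem_Ico]
      exact ⟨by linarith, by linarith⟩
    simp only [lowerWord, if_neg hc, hw]
    simp

private lemma step_upper (α ρ : ℝ) (h0 : 0 < α) (h1 : α < 1) (n : ℕ) :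
    (if upperWord α ρ n then (1:ℤ) else 0)
      = ⌊-(ρ + (n:ℝ)*α)⌋ - ⌊-(ρ + ((n:ℝ)+1)*α)⌋ := by
  have hsplit : -(ρ + ((n:ℝ)+1)*α)
      = ((⌊-(ρ + (n:ℝ)*α)⌋:ℤ):ℝ) + (Int.fract (-(ρ + (n:ℝ)*α)) - α) := by
    simp only [Int.fract]; push_cast; ring
  rw [hsplit, Int.floor_intCast_add]
  have hf0 : 0 ≤ Int.fract (-(ρ + (n:ℝ)*α)) := Int.fract_nonneg _
  have hf1 : Int.fract (-(ρ + (n:ℝ)*α)) < 1 := Int.fract_lt_one _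
  have hcond : (1 - α < fract' (ρ + (n:ℝ)*α)) ↔ Int.fract (-(ρ + (n:ℝ)*α)) < α := by
    unfold fract'
    constructor <;> intro <;> linarith
  by_cases hc : Int.fract (-(ρ + (n:ℝ)*α)) < α
  · have hw : ⌊Int.fract (-(ρ + (n:ℝ)*α)) - α⌋ = -1 := by
      rw [Int.floor_eq_iff] <;> constructor
      · push_cast; linarith
      · push_cast; linarith
    simp only [upperWord, if_pos (hcond.mpr hc), if_pos rfl, hw]
    simp
  · have hw : ⌊Int.fract (-(ρ + (n:ℝ)*α)) - α⌋ = 0 := by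
      push_neg at hc
      rw [Int.floor_eq_zero_iff, Set.mem_Ico]
      exact ⟨by linarith, by linarith⟩
    have hcc : ¬ (1 - α < fract' (ρ + (n:ℝ)*α)) := fun h => hc (hcond.mp h)
    simp only [upperWord, if_neg hcc, hw]
    simp

private lemma count_lower (α ρ : ℝ) (h0 : 0 < α) (h1 : α < 1) (a m : ℕ) :
    (((List.range m).map (fun l => lowerWord α ρ (a + l))).count true : ℤ)
      = ⌊ρ + (((a+m):ℕ):ℝ)*α⌋ - ⌊ρ + ((a:ℕ):ℝ)*α⌋ := by
  rw [count_map_range]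
  push_cast
  have hstep : ∀ l ∈ Finset.range m, (if lowerWord α ρ (a+l) then (1:ℤ) else 0)
      = (fun k => ⌊ρ + (((a+k):ℕ):ℝ)*α⌋) (l+1) - (fun k => ⌊ρ + (((a+k):ℕ):ℝ)*α⌋) l := by
    intro l _
    simp only []
    rw [step_lower α ρ h0 h1 (a+l)]
    congr 2
    push_cast
    ring
  rw [Finset.sum_congr rfl hstep, Finset.sum_range_sub (fun k => ⌊ρ + (((a+k):ℕ):ℝ)*α⌋)]
  norm_num

private lemma count_upper (α ρ : ℝ) (h0 : 0 < α) (h1 : α < 1) (a m : ℕ) :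
    (((List.range m).map (fun l => upperWord α ρ (a + l))).count true : ℤ)
      = ⌊-(ρ + ((a:ℕ):ℝ)*α)⌋ - ⌊-(ρ + (((a+m):ℕ):ℝ)*α)⌋ := by
  rw [count_map_range]
  push_cast
  have hstep : ∀ l ∈ Finset.range m, (if upperWord α ρ (a+l) then (1:ℤ) else 0)
      = (fun k => -⌊-(ρ + (((a+k):ℕ):ℝ)*α)⌋) (l+1) - (fun k => -⌊-(ρ + (((a+k):ℕ):ℝ)*α)⌋) l := by
    intro l _
    simp only []
    rw [step_upper α ρ h0 h1 (a+l)]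
    have : ⌊-(ρ + (((a+(l+1)):ℕ):ℝ)*α)⌋ = ⌊-(ρ + ((((a+l):ℕ):ℝ)+1)*α)⌋ := by
      congr 1
      push_cast
      ring
    rw [this]
    ring
  rw [Finset.sum_congr rfl hstep, Finset.sum_range_sub (fun k => -⌊-(ρ + (((a+k):ℕ):ℝ)*α)⌋)]
  norm_num
  ring

theorem abelian_power_exponent_formula
    (α : ℝ) (hirr : Irrational α) (h0 : 0 < α) (h2 : α < 1 / 2)
    (m : ℕ) (hm : 0 < m) :
    ∀ e : ℕ, 2 ≤ e →
      ((∃ u : List Bool, IsFactor α u ∧ IsAbelianPower m e u) ↔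
        (e : ℤ) ≤ ⌊1 / nint ((m : ℝ) * α)⌋) := by
  intro e he
  have hα1 : α < 1 := by linarith
  have hβirr : Irrational ((m:ℝ) * α) := hirr.natCast_mul (by omega)
  have hγpos : 0 < Int.fract ((m:ℝ)*α) := fract_pos_of_irrational hβirr
  have hγlt : Int.fract ((m:ℝ)*α) < 1 := Int.fract_lt_one _
  have hδeq : nint ((m:ℝ)*α) = min (Int.fract ((m:ℝ)*α)) (1 - Int.fract ((m:ℝ)*α)) := rfl
  have hδpos : 0 < nint ((m:ℝ)*α) := by
    rw [hδeq]; exact lt_min hγpos (by linarith)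
  have hδirr : Irrational (nint ((m:ℝ)*α)) := by
    rw [hδeq]
    have hfr : Irrational (Int.fract ((m:ℝ)*α)) := by
      have := hβirr.sub_intCast ⌊(m:ℝ)*α⌋
      exact this
    rcases le_total (Int.fract ((m:ℝ)*α)) (1 - Int.fract ((m:ℝ)*α)) with hc | hc
    · rwa [min_eq_left hc]
    · rw [min_eq_right hc]
      have := hfr.ratCast_sub 1
      simpa using this
  have hiff : ((e:ℤ) ≤ ⌊1 / nint ((m:ℝ)*α)⌋) ↔ (e:ℝ) * nint ((m:ℝ)*α) < 1 := by
    rw [Int.le_floor]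
    constructor
    · intro hle
      have h1 : (e:ℝ) ≤ 1 / nint ((m:ℝ)*α) := by exact_mod_cast hle
      have h2' : (e:ℝ) * nint ((m:ℝ)*α) ≤ 1 := by
        rw [le_div_iff₀ hδpos] at h1
        linarith
      rcases h2'.lt_or_eq with h3 | h3
      · exact h3
      · exfalso
        have he0 : (e:ℝ) ≠ 0 := by positivity
        have hval : nint ((m:ℝ)*α) = ((((e:ℚ))⁻¹ : ℚ) : ℝ) := by
          push_cast
          field_simp at h3 ⊢
          linarith
        rw [hval] at hδirr
        exact (Rat.not_irrational _) hδirr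
    · intro hlt
      have h1 : (e:ℝ) ≤ 1 / nint ((m:ℝ)*α) := by
        rw [le_div_iff₀ hδpos]
        linarith
      exact_mod_cast h1
  rw [hiff]
  constructor
  · rintro ⟨u, ⟨s, ⟨ρ, hρ0, hρ1, hconv⟩, i, hu⟩, hm1, he2, hlen, hab⟩
    rw [hlen] at hu
    have hblock : ∀ j < e, (u.drop (j*m)).take m
        = (List.range m).map (fun l => s (i + (j*m + l))) := by
      intro j hj
      rw [hu]
      exact block_formula _ e m j hj
    rcases hconv with hs | hs
    · -- lower convention
      set c : ℝ := ρ + (i:ℝ)*α with hc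
      have hcnt : ∀ j < e, ((((u.drop (j*m)).take m).count true : ℤ)) = Fblk c ((m:ℝ)*α) j := by
        intro j hj
        rw [hblock j hj, hs]
        have hfun : (fun l => lowerWord α ρ (i + (j*m + l)))
            = (fun l => lowerWord α ρ ((i + j*m) + l)) := by
          funext l; congr 1; omega
        rw [hfun, count_lower α ρ h0 hα1 (i+j*m) m]
        unfold Fblk
        have e1 : ρ + (((i+j*m+m):ℕ):ℝ)*α = c + ((j:ℝ)+1)*((m:ℝ)*α) := by
          rw [hc]; push_cast; ring
        have e2 : ρ + (((i+j*m):ℕ):ℝ)*α = c + (j:ℝ)*((m:ℝ)*α) := by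
          rw [hc]; push_cast; ring
        rw [e1, e2]
      have hF : ∀ j < e, Fblk c ((m:ℝ)*α) j = Fblk c ((m:ℝ)*α) 0 := by
        intro j hj
        have h1 := (hab j hj 0 (by omega)).2
        rw [← hcnt j hj, ← hcnt 0 (by omega)]
        exact_mod_cast h1
      have := core_fwd ((m:ℝ)*α) c hγpos e he hF
      rw [hδeq]
      exact this
    · -- upper convention
      set c : ℝ := -ρ - (i:ℝ)*α - (e:ℝ)*((m:ℝ)*α) with hc
      have hcnt : ∀ j < e, ((((u.drop (j*m)).take m).count true : ℤ)) = Fblk c ((m:ℝ)*α) (e-1-j) := by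
        intro j hj
        rw [hblock j hj, hs]
        have hfun : (fun l => upperWord α ρ (i + (j*m + l)))
            = (fun l => upperWord α ρ ((i + j*m) + l)) := by
          funext l; congr 1; omega
        rw [hfun, count_upper α ρ h0 hα1 (i+j*m) m]
        unfold Fblk
        have hc1 : (((e-1-j):ℕ):ℝ) = (e:ℝ) - 1 - (j:ℝ) := by
          have h' : (e-1-j) + (j+1) = e := by omega
          have := congrArg (Nat.cast : ℕ → ℝ) h'
          push_cast at this
          linarith
        have e1 : -(ρ + (((i+j*m):ℕ):ℝ)*α) = c + ((((e-1-j):ℕ):ℝ)+1)*((m:ℝ)*α) := by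
          rw [hc, hc1]; push_cast; ring
        have e2 : -(ρ + (((i+j*m+m):ℕ):ℝ)*α) = c + (((e-1-j):ℕ):ℝ)*((m:ℝ)*α) := by
          rw [hc, hc1]; push_cast; ring
        rw [e1, e2]
      have hF : ∀ j < e, Fblk c ((m:ℝ)*α) j = Fblk c ((m:ℝ)*α) 0 := by
        intro j hj
        have ha := hcnt (e-1-j) (by omega)
        rw [show e-1-(e-1-j) = j from by omega] at ha
        have hb := hcnt (e-1) (by omega)
        rw [show e-1-(e-1) = 0 from by omega] at hb
        have h1 := (hab (e-1-j) (by omega) (e-1) (by omega)).2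
        rw [← ha, ← hb]
        exact_mod_cast h1
      have := core_fwd ((m:ℝ)*α) c hγpos e he hF
      rw [hδeq]
      exact this
  · intro hlt
    rw [hδeq] at hlt
    obtain ⟨ρ, hρ0, hρ1, hF⟩ := core_bwd ((m:ℝ)*α) hγpos e he hlt
    refine ⟨(List.range (e*m)).map (lowerWord α ρ),
      ⟨lowerWord α ρ, ⟨ρ, hρ0, hρ1, Or.inl rfl⟩, 0, by simp⟩,
      hm, he, by simp, ?_⟩
    intro i hi j hj
    have hcnt : ∀ k < e, (((((List.range (e*m)).map (lowerWord α ρ)).drop (k*m)).take m).count true : ℤ)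
        = Fblk ρ ((m:ℝ)*α) k := by
      intro k hk
      rw [block_formula (lowerWord α ρ) e m k hk]
      have hfun : (fun l => lowerWord α ρ (k*m + l)) = (fun l => lowerWord α ρ ((k*m) + l)) := rfl
      rw [hfun, count_lower α ρ h0 hα1 (k*m) m]
      unfold Fblk
      have e1 : ρ + (((k*m+m):ℕ):ℝ)*α = ρ + ((k:ℝ)+1)*((m:ℝ)*α) := by push_cast; ring
      have e2 : ρ + (((k*m):ℕ):ℝ)*α = ρ + (k:ℝ)*((m:ℝ)*α) := by push_cast; ring
      rw [e1, e2]
    constructor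
    · rw [block_formula (lowerWord α ρ) e m i hi, block_formula (lowerWord α ρ) e m j hj]
      simp
    · have : (((((List.range (e*m)).map (lowerWord α ρ)).drop (i*m)).take m).count true : ℤ)
          = (((((List.range (e*m)).map (lowerWord α ρ)).drop (j*m)).take m).count true : ℤ) := by
        rw [hcnt i hi, hcnt j hj, hF i hi, hF j hj]
      exact_mod_cast this

end SturmianAbelian
end
end
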